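/- Let $n \ge 2$, let $\hat{a}_1, \dots, \hat{a}_n, \hat{b}_1, \dots, \hat{b}_n > 0$, and suppose for each $i$ that $\sum_{j \ne i} \psi(\hat{a}_i + \hat{b}_j) - (n-1)\psi(\hat{a}_i) + R_i = 0$ and $\sum_{i \ne j} \psi(\hat{a}_i + \hat{b}_j) - (n-1)\psi(\hat{b}_j) + C_j = 0$. Let $M = \max\{\max_i(-R_i/(n-1)), \max_i(-C_i/(n-1))\}$, assume $M > \ln 2$, and let $\varepsilon > 0$ satisfy $\psi(2\varepsilon) - \psi(\varepsilon) = M$. Then $\hat{a}_i \ge \varepsilon$ and $\hat{b}_i \ge \varepsilon$ for all $i$. -/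

import Mathlib

open Finset

/-- The digamma function `ψ = Γ'/Γ`, as the derivative of `log ∘ Γ` on `(0,∞)`. -/
noncomputable def digamma (x : ℝ) : ℝ := deriv (fun y => Real.log (Real.Gamma y)) x

lemma logGamma_hasDeriv {x : ℝ} (hx : 0 < x) :
    HasDerivAt (fun y => Real.log (Real.Gamma y)) (digamma x) x := by
  have h1 : DifferentiableAt ℝ (fun y => Real.log (Real.Gamma y)) x := by
    apply DifferentiableAt.log
    · exact Real.differentiableAt_Gamma (fun m => by
        have hm : -(m : ℝ) ≤ 0 := neg_nonpos.mpr (Nat.cast_nonneg m)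
        exact (lt_of_le_of_lt hm hx).ne')
    · exact (Real.Gamma_pos_of_pos hx).ne'
  exact h1.hasDerivAt

lemma digamma_mono {x y : ℝ} (hx : 0 < x) (hxy : x ≤ y) : digamma x ≤ digamma y := by
  have hy : 0 < y := lt_of_lt_of_le hx hxy
  have := Real.convexOn_log_Gamma.monotoneOn_deriv
    (fun z hz => (logGamma_hasDeriv hz).differentiableAt)
    (Set.mem_Ioi.mpr hx) (Set.mem_Ioi.mpr hy) hxy
  exact this

lemma digamma_rec {x : ℝ} (hx : 0 < x) : digamma (x + 1) = digamma x + 1 / x := by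
  have hL : HasDerivAt (fun y => Real.log (Real.Gamma (y + 1))) (digamma (x + 1)) x := by
    have := (logGamma_hasDeriv (show 0 < x + 1 by linarith)).comp x
      ((hasDerivAt_id x).add_const (1 : ℝ))
    simpa [Function.comp_def] using this
  have hR : HasDerivAt (fun y => Real.log y + Real.log (Real.Gamma y)) (x⁻¹ + digamma x) x :=
    (Real.hasDerivAt_log hx.ne').add (logGamma_hasDeriv hx)
  have hev : (fun y => Real.log (Real.Gamma (y + 1)))
      =ᶠ[nhds x] (fun y => Real.log y + Real.log (Real.Gamma y)) := by
    filter_upwards [eventually_gt_nhds hx] with y hy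
    rw [Real.Gamma_add_one hy.ne', Real.log_mul hy.ne' (Real.Gamma_pos_of_pos hy).ne']
  have := hev.deriv_eq
  rw [hL.deriv, hR.deriv] at this
  rw [this]; ring

lemma digamma_add_nat {x : ℝ} (hx : 0 < x) (N : ℕ) :
    digamma (x + N) = digamma x + ∑ k ∈ range N, 1 / (x + k) := by
  induction N with
  | zero => simp
  | succ N ih =>
    have h1 : (0 : ℝ) < x + N := by positivity
    have h2 : x + ((N + 1 : ℕ) : ℝ) = (x + N) + 1 := by push_cast; ring
    rw [h2, digamma_rec h1, ih, Finset.sum_range_succ]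
    ring

lemma h_nonneg {z : ℝ} (hz : 0 < z) : 0 ≤ digamma (z + 1/2) - digamma z :=
  sub_nonneg.mpr (digamma_mono hz (by linarith))

lemma h_le {z : ℝ} (hz : 0 < z) : digamma (z + 1/2) - digamma z ≤ 1 / z := by
  have h1 := digamma_rec hz
  have h2 : digamma (z + 1/2) ≤ digamma (z + 1) :=
    digamma_mono (by linarith) (by linarith)
  linarith

lemma t_anti {u v : ℝ} (hu : 0 < u) (huv : u ≤ v) :
    1/v - 1/(v + 1/2) ≤ 1/u - 1/(u + 1/2) := by
  have hv : 0 < v := lt_of_lt_of_le hu huv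
  have h1 : 1/u - 1/(u + 1/2) = 1/(2*u*(u + 1/2)) := by field_simp; ring
  have h2 : 1/v - 1/(v + 1/2) = 1/(2*v*(v + 1/2)) := by field_simp; ring
  rw [h1, h2]
  apply one_div_le_one_div_of_le (by positivity)
  nlinarith

lemma t_strict_anti {u v : ℝ} (hu : 0 < u) (huv : u < v) :
    1/v - 1/(v + 1/2) < 1/u - 1/(u + 1/2) := by
  have hv : 0 < v := hu.trans huv
  have h1 : 1/u - 1/(u + 1/2) = 1/(2*u*(u + 1/2)) := by field_simp; ring
  have h2 : 1/v - 1/(v + 1/2) = 1/(2*v*(v + 1/2)) := by field_simp; ring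
  rw [h1, h2]
  apply one_div_lt_one_div_of_lt (by positivity)
  nlinarith

lemma h_telescope {x : ℝ} (hx : 0 < x) (N : ℕ) :
    digamma (x + 1/2) - digamma x
      = (digamma (x + N + 1/2) - digamma (x + N))
        + ∑ k ∈ range N, (1/(x + k) - 1/(x + k + 1/2)) := by
  have e1 := digamma_add_nat hx N
  have e2 := digamma_add_nat (show 0 < x + 1/2 by linarith) N
  have e3 : x + 1/2 + (N : ℝ) = x + N + 1/2 := by ring
  rw [e3] at e2
  have e4 : ∑ k ∈ range N, (1/(x + k) - 1/(x + k + 1/2))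
      = (∑ k ∈ range N, 1/(x + k)) - ∑ k ∈ range N, 1/(x + 1/2 + k) := by
    rw [← Finset.sum_sub_distrib]
    apply Finset.sum_congr rfl
    intro k _
    ring_nf
  rw [e4]
  linarith

lemma h_strictAnti {x y : ℝ} (hx : 0 < x) (hxy : x < y) :
    digamma (y + 1/2) - digamma y < digamma (x + 1/2) - digamma x := by
  have hy : 0 < y := hx.trans hxy
  set δ := (1/x - 1/(x + 1/2)) - (1/y - 1/(y + 1/2)) with hδ
  have hδpos : 0 < δ := sub_pos.mpr (t_strict_anti hx hxy)
  obtain ⟨N, hN⟩ := exists_nat_gt (1/δ - y)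
  set Nn := N + 1 with hNn
  have hsum : δ ≤ ∑ k ∈ range Nn, ((1/(x + k) - 1/(x + k + 1/2)) - (1/(y + k) - 1/(y + k + 1/2))) := by
    have h0 : ((1/(x + (0:ℕ)) - 1/(x + (0:ℕ) + 1/2)) - (1/(y + (0:ℕ)) - 1/(y + (0:ℕ) + 1/2))) = δ := by
      simp [hδ]
    calc δ = _ := h0.symm
      _ ≤ _ := Finset.single_le_sum (f := fun k : ℕ =>
            ((1/(x + k) - 1/(x + k + 1/2)) - (1/(y + k) - 1/(y + k + 1/2))))
          (fun k _ => sub_nonneg.mpr (t_anti (by positivity) (by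
            have : (0:ℝ) ≤ (k:ℝ) := Nat.cast_nonneg k
            linarith))) (Finset.mem_range.mpr (Nat.succ_pos N))
  have hxN := h_telescope hx Nn
  have hyN := h_telescope hy Nn
  have htail1 : 0 ≤ digamma (x + Nn + 1/2) - digamma (x + Nn) := h_nonneg (by positivity)
  have htail2 : digamma (y + Nn + 1/2) - digamma (y + Nn) ≤ 1/(y + Nn) := h_le (by positivity)
  have htail3 : 1/(y + Nn) < δ := by
    have h2 : 1/δ < y + Nn := by
      have : (N : ℝ) ≤ (Nn : ℝ) := by push_cast [hNn]; linarith
      linarith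
    rw [div_lt_iff₀ (by positivity)]
    have h3 : δ * (1/δ) < δ * (y + Nn) := mul_lt_mul_of_pos_left h2 hδpos
    rw [mul_one_div_cancel hδpos.ne'] at h3
    linarith
  have hsplit : ∑ k ∈ range Nn, ((1/(x + k) - 1/(x + k + 1/2)) - (1/(y + k) - 1/(y + k + 1/2)))
      = (∑ k ∈ range Nn, (1/(x + k) - 1/(x + k + 1/2)))
        - ∑ k ∈ range Nn, (1/(y + k) - 1/(y + k + 1/2)) := by
    rw [← Finset.sum_sub_distrib]
  rw [hsplit] at hsum
  linarith

lemma digamma_dup {x : ℝ} (hx : 0 < x) :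
    digamma x + digamma (x + 1/2) = 2 * digamma (2*x) - 2 * Real.log 2 := by
  have h2x : 0 < 2*x := by linarith
  have hF : HasDerivAt (fun y => Real.log (Real.Gamma y) + Real.log (Real.Gamma (y + 1/2)))
      (digamma x + digamma (x + 1/2)) x := by
    have hA := logGamma_hasDeriv hx
    have hB : HasDerivAt (fun y => Real.log (Real.Gamma (y + 1/2))) (digamma (x + 1/2)) x := by
      have := (logGamma_hasDeriv (show 0 < x + 1/2 by linarith)).comp x
        ((hasDerivAt_id x).add_const (1/2 : ℝ))
      simpa [Function.comp_def] using this
    exact hA.add hB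
  have hG : HasDerivAt
      (fun y => Real.log (Real.Gamma (2*y)) + ((1 - 2*y) * Real.log 2 + Real.log (Real.sqrt Real.pi)))
      (2 * digamma (2*x) - 2 * Real.log 2) x := by
    have h1 : HasDerivAt (fun y => Real.log (Real.Gamma (2*y))) (2 * digamma (2*x)) x := by
      have h0 : HasDerivAt (fun y => Real.log (Real.Gamma (2*y))) (digamma (2*x) * (2*1)) x :=
        (logGamma_hasDeriv h2x).comp x ((hasDerivAt_id x).const_mul (2 : ℝ))
      convert h0 using 1
      ring
    have h2 : HasDerivAt (fun y : ℝ => (1 - 2*y) * Real.log 2 + Real.log (Real.sqrt Real.pi))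
        (-2 * Real.log 2) x := by
      have h3 : HasDerivAt (fun y : ℝ => (1 - 2*y) * Real.log 2) (-2 * Real.log 2) x := by
        have := (((hasDerivAt_id x).const_mul (2 : ℝ)).const_sub 1).mul_const (Real.log 2)
        simpa using this
      simpa using h3.add_const (Real.log (Real.sqrt Real.pi))
    have : HasDerivAt
        (fun y => Real.log (Real.Gamma (2*y)) + ((1 - 2*y) * Real.log 2 + Real.log (Real.sqrt Real.pi)))
        (2 * digamma (2*x) + -2 * Real.log 2) x := h1.add h2
    convert this using 1
    ring
  have hev : (fun y => Real.log (Real.Gamma y) + Real.log (Real.Gamma (y + 1/2)))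
      =ᶠ[nhds x] (fun y => Real.log (Real.Gamma (2*y))
        + ((1 - 2*y) * Real.log 2 + Real.log (Real.sqrt Real.pi))) := by
    filter_upwards [eventually_gt_nhds hx] with y hy
    have hgy := Real.Gamma_pos_of_pos hy
    have hgy2 := Real.Gamma_pos_of_pos (show 0 < y + 1/2 by linarith)
    have hg2y := Real.Gamma_pos_of_pos (show 0 < 2*y by linarith)
    have hrp : (0:ℝ) < (2:ℝ) ^ (1 - 2*y) := Real.rpow_pos_of_pos two_pos _
    have hsp : (0:ℝ) < Real.sqrt Real.pi := Real.sqrt_pos.mpr Real.pi_pos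
    have hdup := Real.Gamma_mul_Gamma_add_half_of_pos hy
    have hlog : Real.log (Real.Gamma y * Real.Gamma (y + 1/2))
        = Real.log (Real.Gamma (2*y) * 2 ^ (1 - 2*y) * Real.sqrt Real.pi) := by rw [hdup]
    rw [Real.log_mul hgy.ne' hgy2.ne', Real.log_mul (by positivity) hsp.ne',
      Real.log_mul hg2y.ne' hrp.ne', Real.log_rpow two_pos] at hlog
    linarith
  have := hev.deriv_eq
  rw [hF.deriv, hG.deriv] at this
  exact this

lemma g_strictAnti {x y : ℝ} (hx : 0 < x) (hxy : x < y) :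
    digamma (2*y) - digamma y < digamma (2*x) - digamma x := by
  have hy : 0 < y := hx.trans hxy
  have d1 := digamma_dup hx
  have d2 := digamma_dup hy
  have hh := h_strictAnti hx hxy
  linarith

theorem mle_solution_lower_bound (n : ℕ) (hn : 2 ≤ n)
    (a b R C : Fin n → ℝ)
    (ha : ∀ i, 0 < a i) (hb : ∀ i, 0 < b i)
    (hMLa : ∀ i, ∑ j ∈ univ \ {i}, digamma (a i + b j) - (n - 1) * digamma (a i) + R i = 0)
    (hMLb : ∀ j, ∑ i ∈ univ \ {j}, digamma (a i + b j) - (n - 1) * digamma (b j) + C j = 0)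
    (M : ℝ)
    (hne : (univ : Finset (Fin n)).Nonempty)
    (hM : M = max ((univ : Finset (Fin n)).sup' hne (fun i => -R i / (n - 1)))
      ((univ : Finset (Fin n)).sup' hne (fun i => -C i / (n - 1))))
    (hMgt : Real.log 2 < M)
    (ε : ℝ) (hε : 0 < ε) (hεM : digamma (2 * ε) - digamma ε = M) :
    (∀ i, ε ≤ a i) ∧ (∀ i, ε ≤ b i) := by
  have hn1 : (0:ℝ) < (n:ℝ) - 1 := by
    have : (2:ℝ) ≤ (n:ℝ) := by exact_mod_cast hn
    linarith
  obtain ⟨i₀, -, hi₀⟩ := Finset.exists_mem_eq_inf' hne a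
  obtain ⟨j₀, -, hj₀⟩ := Finset.exists_mem_eq_inf' hne b
  set A := univ.inf' hne a with hA
  set B := univ.inf' hne b with hB
  set m := min A B with hm
  have hmpos : 0 < m := lt_min (hi₀ ▸ ha i₀) (hj₀ ▸ hb j₀)
  have hma : ∀ i, m ≤ a i := fun i => (min_le_left A B).trans (Finset.inf'_le a (mem_univ i))
  have hmb : ∀ i, m ≤ b i := fun i => (min_le_right A B).trans (Finset.inf'_le b (mem_univ i))
  have hcard : ∀ i : Fin n, ((univ \ {i} : Finset (Fin n)).card : ℝ) = (n:ℝ) - 1 := by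
    intro i
    rw [Finset.card_sdiff_of_subset (Finset.subset_univ _)]
    simp only [Finset.card_univ, Fintype.card_fin, Finset.card_singleton]
    have h1 : 1 ≤ n := by omega
    push_cast [Nat.cast_sub h1]
    ring
  have key : digamma (2*m) - digamma m ≤ M := by
    rcases le_total A B with hAB | hAB
    · have hmA : m = a i₀ := by rw [hm, min_eq_left hAB, hi₀]
      have hsum : ((n:ℝ) - 1) * digamma (2*m) ≤ ∑ j ∈ univ \ {i₀}, digamma (a i₀ + b j) := by
        have h1 := Finset.card_nsmul_le_sum (univ \ {i₀}) (fun j => digamma (a i₀ + b j))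
          (digamma (2*m)) (fun j _ => by
            apply digamma_mono (by positivity)
            have := hmb j
            rw [two_mul]
            rw [← hmA]
            linarith)
        rw [nsmul_eq_mul] at h1
        rw [hcard i₀] at h1
        exact h1
      have heq := hMLa i₀
      have h1 : digamma (2*m) - digamma m ≤ -R i₀ / ((n:ℝ) - 1) := by
        rw [le_div_iff₀ hn1]
        have hd : digamma m = digamma (a i₀) := by rw [hmA]
        rw [← hd] at heq
        linarith [hsum, heq]
      have h2 : -R i₀ / ((n:ℝ) - 1) ≤ M := by
        rw [hM]
        exact le_max_of_le_left (Finset.le_sup' (fun i => -R i / ((n:ℝ) - 1)) (mem_univ i₀))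
      linarith
    · have hmB : m = b j₀ := by rw [hm, min_eq_right hAB, hj₀]
      have hsum : ((n:ℝ) - 1) * digamma (2*m) ≤ ∑ i ∈ univ \ {j₀}, digamma (a i + b j₀) := by
        have h1 := Finset.card_nsmul_le_sum (univ \ {j₀}) (fun i => digamma (a i + b j₀))
          (digamma (2*m)) (fun i _ => by
            apply digamma_mono (by positivity)
            have := hma i
            rw [two_mul]
            rw [← hmB]
            linarith)
        rw [nsmul_eq_mul] at h1
        rw [hcard j₀] at h1
        exact h1
      have heq := hMLb j₀
      have h1 : digamma (2*m) - digamma m ≤ -C j₀ / ((n:ℝ) - 1) := by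
        rw [le_div_iff₀ hn1]
        have hd : digamma m = digamma (b j₀) := by rw [hmB]
        rw [← hd] at heq
        linarith [hsum, heq]
      have h2 : -C j₀ / ((n:ℝ) - 1) ≤ M := by
        rw [hM]
        exact le_max_of_le_right (Finset.le_sup' (fun i => -C i / ((n:ℝ) - 1)) (mem_univ j₀))
      linarith
  have hεm : ε ≤ m := by
    by_contra hc
    push_neg at hc
    have := g_strictAnti hmpos hc
    rw [hεM] at this
    linarith
  exact ⟨fun i => hεm.trans (hma i), fun i => hεm.trans (hmb i)⟩
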